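/- In an orthomodular lattice admitting a strong set of quantum states, the n-Godowski equation holds for each n ≥ 3: (a₁→a₂)∩(a₂→a₃)∩⋯∩(aₙ₋₁→aₙ)∩(aₙ→a₁) equals the same expression with indices reversed, i.e., (aₙ→aₙ₋₁)∩⋯∩(a₂→a₁)∩(a₁→aₙ). -/

import Mathlib

/-- An ortholattice: an algebra ⟨L, ', ∪, ∩⟩ satisfying the standard identities. -/
structure OL (L : Type*) where
  compl : L → L
  join : L → L → L
  meet : L → L → L
  join_comm : ∀ a b, join a b = join b a
  join_assoc : ∀ a b c, join (join a b) c = join a (join b c)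
  compl_compl : ∀ a, compl (compl a) = a
  join_one : ∀ a b, join a (join b (compl b)) = join b (compl b)
  absorb : ∀ a b, join a (meet a b) = a
  meet_def : ∀ a b, meet a b = compl (join (compl a) (compl b))

/-- The ordering relation on an ortholattice: a ≤ b iff a ∩ b = a. -/
def OL.le {L : Type*} (O : OL L) (a b : L) : Prop := O.meet a b = a

/-- A state on an ortholattice: m : L → [0,1] with m(1) = 1 and finite additivity
on orthogonal pairs (a ⊥ b iff a ≤ b'). -/
def OL.IsState {L : Type*} (O : OL L) (m : L → ℝ) : Prop :=
  (∀ a, 0 ≤ m a ∧ m a ≤ 1) ∧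
  (∀ a, m (O.join a (O.compl a)) = 1) ∧
  (∀ a b, O.le a (O.compl b) → m (O.join a b) = m a + m b)

/-- Sasaki implication a → b := a' ∪ (a ∩ b). -/
def OL.arr {L : Type*} (O : OL L) (a b : L) : L := O.join (O.compl a) (O.meet a b)

/-- S is a strong set of quantum states on O. -/
def OL.IsStrongQuantum {L : Type*} (O : OL L) (S : Set (L → ℝ)) : Prop :=
  S.Nonempty ∧ (∀ m ∈ S, O.IsState m) ∧
  ∀ a b : L, ∃ m ∈ S, ((m a = 1 → m b = 1) → O.le a b)

/-- Meet of a nonempty list of elements: x ∩ (y₁ ∩ (⋯ ∩ yₖ)). -/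
def OL.meetList {L : Type*} (O : OL L) (x : L) : List L → L
  | [] => x
  | y :: t => O.meet x (O.meetList y t)

/-- The cyclic Godowski meet (a₀→a₁) ∩ (a₁→a₂) ∩ ⋯ ∩ (a_{n-1}→a₀), indices in
`Fin n` taken cyclically. -/
def OL.goMeet {L : Type*} (O : OL L) {n : ℕ} [NeZero n] (a : Fin n → L) : L :=
  O.meetList (O.arr (a 0) (a 1))
    ((List.ofFn fun i : Fin n => O.arr (a i) (a (i + 1))).tail)

namespace OL
variable {L : Type*} (O : OL L)

lemma compl_join (a b : L) : O.compl (O.join a b) = O.meet (O.compl a) (O.compl b) := by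
  rw [O.meet_def, O.compl_compl, O.compl_compl]

lemma compl_meet (a b : L) : O.compl (O.meet a b) = O.join (O.compl a) (O.compl b) := by
  rw [O.meet_def, O.compl_compl]

lemma meet_comm (a b : L) : O.meet a b = O.meet b a := by
  rw [O.meet_def, O.meet_def, O.join_comm]

lemma meet_assoc (a b c : L) : O.meet (O.meet a b) c = O.meet a (O.meet b c) := by
  rw [O.meet_def, O.meet_def, O.meet_def, O.meet_def, O.compl_compl, O.compl_compl,
    O.join_assoc]

lemma absorb2 (a b : L) : O.meet a (O.join a b) = a := by
  have h : O.compl (O.join a b) = O.meet (O.compl a) (O.compl b) := O.compl_join a b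
  rw [O.meet_def, h, O.absorb, O.compl_compl]

lemma join_idem (a : L) : O.join a a = a := by
  have := O.absorb a (O.join a a)
  rwa [O.absorb2] at this

lemma meet_idem (a : L) : O.meet a a = a := by
  rw [O.meet_def, O.join_idem, O.compl_compl]

lemma le_refl (a : L) : O.le a a := O.meet_idem a

lemma le_antisymm {a b : L} (h1 : O.le a b) (h2 : O.le b a) : a = b := by
  unfold OL.le at h1 h2
  rw [← h1, O.meet_comm, h2]

lemma le_trans {a b c : L} (h1 : O.le a b) (h2 : O.le b c) : O.le a c := by
  unfold OL.le at *
  rw [← h1, O.meet_assoc, h2]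

lemma le_iff_join {a b : L} : O.le a b ↔ O.join a b = b := by
  constructor
  · intro h
    unfold OL.le at h
    rw [← h, O.join_comm]
    conv_rhs => rw [← O.absorb b a]
    rw [O.meet_comm]
  · intro h
    unfold OL.le
    rw [← h, O.absorb2]

lemma meet_le_left (a b : L) : O.le (O.meet a b) a := by
  unfold OL.le
  rw [O.meet_comm, ← O.meet_assoc, O.meet_idem]

lemma meet_le_right (a b : L) : O.le (O.meet a b) b := by
  rw [O.meet_comm]; exact O.meet_le_left b a

lemma le_meet {c a b : L} (h1 : O.le c a) (h2 : O.le c b) : O.le c (O.meet a b) := by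
  unfold OL.le at *
  rw [← O.meet_assoc, h1, h2]

lemma le_join_left (a b : L) : O.le a (O.join a b) := O.absorb2 a b

lemma le_join_right (a b : L) : O.le b (O.join a b) := by
  rw [O.join_comm]; exact O.le_join_left b a

lemma join_le {a b c : L} (h1 : O.le a c) (h2 : O.le b c) : O.le (O.join a b) c := by
  rw [le_iff_join] at *
  rw [O.join_assoc, h2, h1]

lemma compl_le_compl {a b : L} (h : O.le a b) : O.le (O.compl b) (O.compl a) := by
  rw [le_iff_join] at h
  unfold OL.le
  rw [← O.compl_join, O.join_comm b a, h]

lemma one_eq (x y : L) : O.join x (O.compl x) = O.join y (O.compl y) := by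
  have h1 := O.join_one (O.join x (O.compl x)) y
  have h2 := O.join_one (O.join y (O.compl y)) x
  rw [O.join_comm] at h2
  rw [← h1, h2]

lemma le_top (a x : L) : O.le a (O.join x (O.compl x)) := by
  rw [le_iff_join]
  exact O.join_one a x

lemma bot_le (a x : L) : O.le (O.meet x (O.compl x)) a := by
  unfold OL.le
  rw [O.meet_def x (O.compl x), O.meet_def, O.compl_compl]
  rw [O.join_comm, O.join_one]

lemma meet_top (a x : L) : O.meet a (O.join x (O.compl x)) = a := O.le_top a x

lemma join_bot (a x : L) : O.join a (O.meet x (O.compl x)) = a := by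
  rw [O.join_comm]
  exact O.le_iff_join.mp (O.bot_le a x)

/-- orthomodular-type consequence of the Foulis–Holland hypothesis. -/
lemma om (hOML : ∀ a b c : L, O.le b a → O.le c (O.compl a) →
      O.meet a (O.join b c) = O.join (O.meet a b) (O.meet a c))
    {a b : L} (h : O.le a b) :
    O.join a (O.meet b (O.compl a)) = b := by
  set y := O.join a (O.meet b (O.compl a)) with hy
  have hyb : O.le y b := O.join_le h (O.meet_le_left b (O.compl a))
  have hu : O.join y (O.compl b) = O.join (O.compl (O.meet (O.compl a) b))
      (O.compl (O.compl (O.meet (O.compl a) b))) := by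
    have hcy : O.compl y = O.meet (O.compl a) (O.join (O.compl b) a) := by
      rw [hy, O.compl_join, O.compl_meet, O.compl_compl]
    have h2 : O.join y (O.compl b) = O.compl (O.meet (O.compl y) b) := by
      rw [O.compl_meet, O.compl_compl]
    rw [h2, hcy]
    have hrearr : O.meet (O.meet (O.compl a) (O.join (O.compl b) a)) b
        = O.meet (O.meet (O.compl a) b) (O.join (O.compl b) a) := by
      rw [O.meet_assoc, O.meet_assoc, O.meet_comm b (O.join (O.compl b) a)]
    have hcompl : O.join (O.compl b) a = O.compl (O.meet (O.compl a) b) := by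
      rw [O.compl_meet, O.compl_compl, O.join_comm]
    rw [hrearr, hcompl, O.compl_meet]
  have hd := hOML b y (O.compl b) hyb (O.le_refl (O.compl b))
  rw [hu, O.meet_top] at hd
  have h1 : O.meet b y = y := by rw [O.meet_comm]; exact hyb
  rw [h1, O.join_bot] at hd
  exact hd.symm

section States
variable {m : L → ℝ} (hm : O.IsState m)
include hm

lemma m_nonneg (a : L) : 0 ≤ m a := (hm.1 a).1
lemma m_le_one (a : L) : m a ≤ 1 := (hm.1 a).2

lemma m_compl (a : L) : m (O.compl a) = 1 - m a := by
  have h := hm.2.2 a (O.compl a) (by rw [O.compl_compl]; exact O.le_refl a)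
  rw [hm.2.1 a] at h
  linarith

lemma m_mono (hOML : ∀ a b c : L, O.le b a → O.le c (O.compl a) →
      O.meet a (O.join b c) = O.join (O.meet a b) (O.meet a c))
    {a b : L} (h : O.le a b) : m a ≤ m b := by
  have hom := O.om hOML h
  have hadd := hm.2.2 a (O.meet b (O.compl a)) ?_
  · rw [hom] at hadd
    have := O.m_nonneg hm (O.meet b (O.compl a))
    linarith
  · rw [O.compl_meet, O.compl_compl]
    exact O.le_join_right (O.compl b) a

lemma m_arr (a b : L) : m (O.arr a b) = 1 - m a + m (O.meet a b) := by
  have hadd := hm.2.2 (O.compl a) (O.meet a b) ?_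
  · simp only [OL.arr]
    rw [hadd, O.m_compl hm]
  · rw [O.compl_meet]
    exact O.le_join_left (O.compl a) (O.compl b)

end States

lemma meetList_le {x y : L} {l : List L} (h : y ∈ x :: l) : O.le (O.meetList x l) y := by
  induction l generalizing x with
  | nil =>
    simp at h
    subst h
    exact O.le_refl _
  | cons z t ih =>
    rw [List.mem_cons] at h
    rcases h with h | h
    · subst h
      exact O.meet_le_left _ _
    · exact O.le_trans (O.meet_le_right x _) (ih h)

lemma le_meetList {c x : L} {l : List L} (h : ∀ y ∈ x :: l, O.le c y) :
    O.le c (O.meetList x l) := by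
  induction l generalizing x with
  | nil => exact h x (by simp)
  | cons z t ih =>
    exact O.le_meet (h x (by simp)) (ih fun y hy => h y (by simp at hy ⊢; tauto))

lemma goMeet_eq {n : ℕ} (a : Fin (n + 1) → L) :
    O.goMeet a = O.meetList (O.arr (a 0) (a (0 + 1)))
      (List.ofFn fun i : Fin n => O.arr (a i.succ) (a (i.succ + 1))) := by
  rw [OL.goMeet, List.ofFn_succ]
  simp

lemma goMeet_le {n : ℕ} (a : Fin (n + 1) → L) (i : Fin (n + 1)) :
    O.le (O.goMeet a) (O.arr (a i) (a (i + 1))) := by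
  rw [O.goMeet_eq]
  apply O.meetList_le
  induction i using Fin.cases with
  | zero => exact List.mem_cons_self
  | succ j =>
    apply List.mem_cons_of_mem
    simp only [List.mem_ofFn, Set.mem_range]
    exact ⟨j, rfl⟩

lemma le_goMeet {n : ℕ} {c : L} {a : Fin (n + 1) → L}
    (h : ∀ i, O.le c (O.arr (a i) (a (i + 1)))) : O.le c (O.goMeet a) := by
  rw [O.goMeet_eq]
  apply O.le_meetList
  intro y hy
  rw [List.mem_cons] at hy
  rcases hy with hy | hy
  · subst hy; exact h 0
  · simp only [List.mem_ofFn, Set.mem_range] at hy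
    obtain ⟨j, rfl⟩ := hy
    exact h j.succ

end OL

/-- The n-Godowski equation (n ≥ 3): the cyclic meet equals the cyclic meet with
the indices reversed (the substitution aᵢ ↦ a_{n-i+1} in 1-indexed notation,
i.e. i ↦ -(i+1) in `Fin n` notation). -/


theorem stmt_7 {L : Type*} (O : OL L)
    (hOML : ∀ a b c : L, O.le b a → O.le c (O.compl a) →
      O.meet a (O.join b c) = O.join (O.meet a b) (O.meet a c))
    (S : Set (L → ℝ)) (hS : O.IsStrongQuantum S)
    (n : ℕ) (a : Fin (n + 3) → L) :
    O.goMeet a = O.goMeet (fun i => a (-(i + 1))) := by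
  
  have key : ∀ b : Fin (n + 3) → L, O.le (O.goMeet b) (O.goMeet fun i => b (-(i + 1))) := by
    intro b
    have main : ∀ j : Fin (n + 3), O.le (O.goMeet b) (O.arr (b (j + 1)) (b j)) := by
      intro j
      obtain ⟨m, hmS, hstr⟩ := hS.2.2 (O.goMeet b) (O.arr (b (j + 1)) (b j))
      apply hstr
      intro hG
      have hm := hS.2.1 m hmS
      have hfac : ∀ i : Fin (n + 3), m (O.meet (b i) (b (i + 1))) = m (b i) := by
        intro i
        have h1 : m (O.arr (b i) (b (i + 1))) = 1 := by
          refine _root_.le_antisymm (O.m_le_one hm _) ?_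
          calc (1:ℝ) = m (O.goMeet b) := hG.symm
          _ ≤ _ := O.m_mono hm hOML (O.goMeet_le b i)
        have h2 := O.m_arr hm (b i) (b (i + 1))
        rw [h1] at h2
        linarith
      have hle : ∀ i : Fin (n + 3), m (b i) ≤ m (b (i + 1)) := by
        intro i
        rw [← hfac i]
        exact O.m_mono hm hOML (O.meet_le_right _ _)
      open Fin.NatCast Fin.CommRing in
      have hconst : ∀ i j : Fin (n + 3), m (b i) ≤ m (b j) := by
        have step : ∀ k : ℕ, ∀ i : Fin (n + 3),
            m (b i) ≤ m (b (i + (k : Fin (n + 3)))) := by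
          intro k
          induction k with
          | zero => intro i; simp
          | succ k ih =>
            intro i
            have hc : ((k + 1 : ℕ) : Fin (n + 3)) = (k : Fin (n + 3)) + 1 := by
              rw [Nat.cast_add, Nat.cast_one]
            rw [hc, ← add_assoc]
            exact le_trans (ih i) (hle _)
        intro i j
        have h := step ((j - i).val) i
        rw [Fin.cast_val_eq_self] at h
        have he : i + (j - i) = j := by ring
        rwa [he] at h
      have harr := O.m_arr hm (b (j + 1)) (b j)
      rw [O.meet_comm, hfac j] at harr
      have heq : m (b j) = m (b (j + 1)) :=
        _root_.le_antisymm (hconst j (j + 1)) (hconst (j + 1) j)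
      rw [harr]
      linarith
    apply O.le_goMeet
    intro i
    have h := main (-(i + 1) - 1)
    have e1 : (-(i + 1) - 1) + 1 = -(i + 1) := by open Fin.CommRing in ring
    have e2 : (-(i + 1) - 1 : Fin (n + 3)) = -(i + 1 + 1) := by open Fin.CommRing in ring
    rw [e1, e2] at h
    exact h
  have h1 := key a
  have h2 := key (fun i => a (-(i + 1)))
  have hdr : (fun i : Fin (n + 3) => (fun i : Fin (n + 3) => a (-(i + 1))) (-(i + 1))) = a := by
    funext i
    simp only
    congr 1
    open Fin.CommRing in ring
  rw [hdr] at h2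
  exact O.le_antisymm h1 h2
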